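/- For the cycle C_n with n ≥ 5, the minimum cardinality of a redundant locating-dominating set is ⌈2n/3⌉; for 3 ≤ n ≤ 4, it is n. -/

import Mathlib

open scoped symmDiff

/-- A locating-dominating (LD) set: every non-detector is dominated, and
distinct non-detectors have distinct neighborhood traces on `S`. -/
def IsLDSet {V : Type*} (G : SimpleGraph V) (S : Set V) : Prop :=
  (∀ v ∉ S, (G.neighborSet v ∩ S).Nonempty) ∧
    ∀ u ∉ S, ∀ v ∉ S, u ≠ v → G.neighborSet u ∩ S ≠ G.neighborSet v ∩ S

/-- A redundant locating-dominating (RED:LD) set. -/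
def IsRedLDSet {V : Type*} (G : SimpleGraph V) (S : Set V) : Prop :=
  IsLDSet G S ∧ ∀ v ∈ S, IsLDSet G (S \ {v})

/-- A leaf is a vertex of degree 1. -/
def IsLeaf {V : Type*} (G : SimpleGraph V) (v : V) : Prop :=
  (G.neighborSet v).ncard = 1

/-- A support vertex is a vertex adjacent to a leaf. -/
def IsSupport {V : Type*} (G : SimpleGraph V) (v : V) : Prop :=
  ∃ u, G.Adj v u ∧ IsLeaf G u

open SimpleGraph
open Fin.CommRing

section Aux

lemma fin1ne {m : ℕ} : (1 : Fin (m+3)) ≠ 0 := by simp [Fin.ext_iff]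
lemma fin2ne {m : ℕ} : (2 : Fin (m+3)) ≠ 0 := by simp [Fin.ext_iff, Nat.mod_eq_of_lt (show 2 < m+3 by omega)]
lemma fin3ne {m : ℕ} : (3 : Fin (m+5)) ≠ 0 := by
  have : ((3:ℕ) : Fin (m+5)) ≠ 0 := by
    rw [Ne, Fin.natCast_eq_zero]
    intro h; have := Nat.le_of_dvd (by norm_num) h; omega
  simpa using this
lemma fin4ne {m : ℕ} : (4 : Fin (m+5)) ≠ 0 := by
  have : ((4:ℕ) : Fin (m+5)) ≠ 0 := by
    rw [Ne, Fin.natCast_eq_zero]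
    intro h; have := Nat.le_of_dvd (by norm_num) h; omega
  simpa using this
lemma fin1ne5 {m : ℕ} : (1 : Fin (m+5)) ≠ 0 := fin1ne (m := m+2)
lemma fin2ne5 {m : ℕ} : (2 : Fin (m+5)) ≠ 0 := fin2ne (m := m+2)

lemma memN {m : ℕ} {v a : Fin (m+3)} :
    a ∈ (cycleGraph (m+3)).neighborSet v ↔ a = v - 1 ∨ a = v + 1 := by
  rw [show (cycleGraph (m+3)).neighborSet v = {v-1,v+1} from cycleGraph_neighborSet (n:=m+1)]
  simp [Set.mem_insert_iff]

lemma lemA1 {m : ℕ} {S : Set (Fin (m+3))}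
    (hS : IsRedLDSet (cycleGraph (m+3)) S) {u : Fin (m+3)} (hu : u ∉ S) : u + 1 ∈ S := by
  by_contra h1
  obtain ⟨⟨hdom, _⟩, hred⟩ := hS
  obtain ⟨a, ha, haS⟩ := hdom u hu
  rw [memN] at ha
  rcases ha with rfl | rfl
  · obtain ⟨hdom', _⟩ := hred _ haS
    have hu' : u ∉ S \ {u-1} := fun h => hu h.1
    obtain ⟨b, hb, hbS⟩ := hdom' u hu'
    rw [memN] at hb
    rcases hb with rfl | rfl
    · exact hbS.2 rfl
    · exact h1 hbS.1
  · exact h1 haS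

lemma lemA2 {m : ℕ} {S : Set (Fin (m+3))}
    (hS : IsRedLDSet (cycleGraph (m+3)) S) {u : Fin (m+3)} (hu : u ∉ S) : u + 2 ∈ S := by
  by_contra h2
  have h1 : u + 1 ∈ S := lemA1 hS hu
  obtain ⟨_, hred⟩ := hS
  obtain ⟨hdom', _⟩ := hred _ h1
  have hx : (u+1) ∉ S \ {u+1} := fun h => h.2 rfl
  obtain ⟨b, hb, hbS⟩ := hdom' (u+1) hx
  rw [memN] at hb
  have e1 : u + 1 - 1 = u := by ring
  have e2 : u + 1 + 1 = u + 2 := by ring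
  rw [e1, e2] at hb
  rcases hb with rfl | rfl
  · exact hu hbS.1
  · exact h2 hbS.1

lemma packing_card {m : ℕ} (T : Finset (Fin (m+3)))
    (hT : ∀ t ∈ T, t + 1 ∉ T ∧ t + 2 ∉ T) : 3 * T.card ≤ m + 3 := by
  classical
  set B : Fin (m+3) → Finset (Fin (m+3)) := fun t => {t, t+1, t+2} with hB
  have hcard : ∀ t, (B t).card = 3 := by
    intro t
    refine Finset.card_eq_three.mpr ⟨t, t+1, t+2, ?_, ?_, ?_, rfl⟩
    · exact fun h => fin1ne (by linear_combination -h)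
    · exact fun h => fin2ne (by linear_combination -h)
    · exact fun h => fin1ne (by linear_combination -h)
  have hdisj : ∀ s ∈ T, ∀ t ∈ T, s ≠ t → Disjoint (B s) (B t) := by
    intro s hs t ht hst
    rw [Finset.disjoint_left]
    intro a haS haT
    simp only [hB, Finset.mem_insert, Finset.mem_singleton] at haS haT
    rcases haS with rfl | rfl | rfl
    · rcases haT with rfl | h | h
      · exact hst rfl
      · exact (hT t ht).1 (h ▸ hs)
      · exact (hT t ht).2 (h ▸ hs)
    · rcases haT with h | h | h
      · exact (hT s hs).1 (h ▸ ht)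
      · exact hst (by linear_combination h)
      · exact (hT t ht).1 (by rwa [show s = t + 1 from by linear_combination h] at hs)
    · rcases haT with h | h | h
      · exact (hT s hs).2 (h ▸ ht)
      · exact (hT s hs).1 (by rwa [show t = s + 1 from by linear_combination -h] at ht)
      · exact hst (by linear_combination h)
  calc 3 * T.card = ∑ t ∈ T, (B t).card := by
        rw [Finset.sum_congr rfl (fun t _ => hcard t)]; simp [mul_comm]
    _ = (T.biUnion B).card := (Finset.card_biUnion hdisj).symm
    _ ≤ (Finset.univ : Finset (Fin (m+3))).card := Finset.card_le_univ _
    _ = m + 3 := by simp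

lemma lowerBound {n : ℕ} (hn : 3 ≤ n) {S : Set (Fin n)}
    (h : IsRedLDSet (cycleGraph n) S) : n - n / 3 ≤ S.ncard := by
  classical
  obtain ⟨m, rfl⟩ : ∃ m, n = m + 3 := ⟨n - 3, by omega⟩
  have hT : 3 * Sᶜ.ncard ≤ m + 3 := by
    rw [Set.ncard_eq_toFinset_card']
    refine packing_card _ ?_
    intro t ht
    rw [Set.mem_toFinset, Set.mem_compl_iff] at ht
    constructor
    · rw [Set.mem_toFinset, Set.mem_compl_iff]
      exact fun hc => hc (lemA1 h ht)
    · rw [Set.mem_toFinset, Set.mem_compl_iff]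
      exact fun hc => hc (lemA2 h ht)
  have hsum : S.ncard + Sᶜ.ncard = m + 3 := by
    rw [Set.ncard_add_ncard_compl, Nat.card_eq_fintype_card, Fintype.card_fin]
  omega

lemma lemB {m : ℕ} {S : Set (Fin (m+5))}
    (h1 : ∀ v, v ∉ S → v + 1 ∈ S) (h2 : ∀ v, v ∉ S → v + 2 ∈ S) :
    IsRedLDSet (cycleGraph (m+5)) S := by
  have hm1 : ∀ v : Fin (m+5), v ∉ S → v - 1 ∈ S := by
    intro v hv
    by_contra h
    exact hv (by have := h1 _ h; rwa [sub_add_cancel] at this)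
  constructor
  · constructor
    · intro v hv
      exact ⟨v + 1, memN.mpr (Or.inr rfl), h1 v hv⟩
    · intro u hu v hv huv heq
      have ha : u + 1 ∈ (cycleGraph (m+5)).neighborSet u ∩ S :=
        ⟨memN.mpr (Or.inr rfl), h1 u hu⟩
      rw [heq] at ha
      rcases memN.mp ha.1 with h | h
      · exact hv ((show v = u + 2 by linear_combination -h) ▸ h2 u hu)
      · exact huv (by linear_combination h)
  · intro x hx
    have hdom' : ∀ v, v ∉ S \ {x} → ((cycleGraph (m+5)).neighborSet v ∩ (S \ {x})).Nonempty := by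
      intro v hv
      by_cases hvS : v ∈ S
      · have hvx : v = x := by
          by_contra hne
          exact hv ⟨hvS, hne⟩
        subst hvx
        by_cases hc : v - 1 ∈ S
        · refine ⟨v - 1, memN.mpr (Or.inl rfl), hc, ?_⟩
          intro h
          rw [Set.mem_singleton_iff] at h
          exact fin1ne5 (by linear_combination -h)
        · refine ⟨v + 1, memN.mpr (Or.inr rfl), ?_, ?_⟩
          · have := h2 _ hc
            rwa [show v - 1 + 2 = v + 1 by ring] at this
          · intro h
            rw [Set.mem_singleton_iff] at h
            exact fin1ne5 (by linear_combination h)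
      · have hvx : v ≠ x := fun h => hvS (h ▸ hx)
        by_cases hc : v + 1 = x
        · refine ⟨v - 1, memN.mpr (Or.inl rfl), hm1 v hvS, ?_⟩
          intro h
          rw [Set.mem_singleton_iff, ← hc] at h
          exact fin2ne5 (by linear_combination -h)
        · exact ⟨v + 1, memN.mpr (Or.inr rfl), h1 v hvS, hc⟩
    refine ⟨hdom', ?_⟩
    have aux : ∀ u, u ∉ S → (cycleGraph (m+5)).neighborSet u ∩ (S \ {x}) ≠
        (cycleGraph (m+5)).neighborSet x ∩ (S \ {x}) := by
      intro u huS heq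
      have hu' : u ∉ S \ {x} := fun h => huS h.1
      obtain ⟨a, haN, haS⟩ := hdom' u hu'
      have hmem0 : a ∈ (cycleGraph (m+5)).neighborSet u ∩ (S \ {x}) := ⟨haN, haS⟩
      rw [heq] at hmem0
      have haN2 : a ∈ (cycleGraph (m+5)).neighborSet x := hmem0.1
      have hux : u ≠ x := fun h => (h ▸ huS) hx
      rcases memN.mp haN with rfl | rfl
      · rcases memN.mp haN2 with h | h
        · exact hux (by linear_combination h)
        · have hxval : x = u - 2 := by linear_combination -h
          have hne : u + 1 ≠ x := by
            rw [hxval]; intro hh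
            exact fin3ne (by linear_combination hh)
          have hmem : u + 1 ∈ (cycleGraph (m+5)).neighborSet u ∩ (S \ {x}) :=
            ⟨memN.mpr (Or.inr rfl), h1 u huS, hne⟩
          rw [heq] at hmem
          rcases memN.mp hmem.1 with hh | hh
          · rw [hxval] at hh
            exact fin4ne (by linear_combination hh)
          · exact hux (by linear_combination hh)
      · rcases memN.mp haN2 with h | h
        · have hxval : x = u + 2 := by linear_combination -h
          have hne : u - 1 ≠ x := by
            rw [hxval]; intro hh
            exact fin3ne (by linear_combination -hh)
          have hmem : u - 1 ∈ (cycleGraph (m+5)).neighborSet u ∩ (S \ {x}) :=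
            ⟨memN.mpr (Or.inl rfl), hm1 u huS, hne⟩
          rw [heq] at hmem
          rcases memN.mp hmem.1 with hh | hh
          · exact hux (by linear_combination hh)
          · rw [hxval] at hh
            exact fin4ne (by linear_combination -hh)
        · exact hux (by linear_combination h)
    intro u hu v hv huv heq
    by_cases huS : u ∈ S
    · have hux : u = x := by
        by_contra hne
        exact hu ⟨huS, hne⟩
      by_cases hvS : v ∈ S
      · have hvx : v = x := by
          by_contra hne
          exact hv ⟨hvS, hne⟩
        exact huv (hux.trans hvx.symm)
      · exact aux v hvS (hux ▸ heq.symm)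
    · by_cases hvS : v ∈ S
      · have hvx : v = x := by
          by_contra hne
          exact hv ⟨hvS, hne⟩
        exact aux u huS (hvx ▸ heq)
      · obtain ⟨a, haN, haS⟩ := hdom' u hu
        have hmem0 : a ∈ (cycleGraph (m+5)).neighborSet u ∩ (S \ {x}) := ⟨haN, haS⟩
        rw [heq] at hmem0
        have haN2 : a ∈ (cycleGraph (m+5)).neighborSet v := hmem0.1
        rcases memN.mp haN with rfl | rfl
        · rcases memN.mp haN2 with h | h
          · exact huv (by linear_combination h)
          · exact huS ((show u = v + 2 by linear_combination h) ▸ h2 v hvS)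
        · rcases memN.mp haN2 with h | h
          · exact hvS ((show v = u + 2 by linear_combination -h) ▸ h2 u huS)
          · exact huv (by linear_combination h)

def T0 (n : ℕ) : Set (Fin n) := {v | v.val % 3 = 2 ∧ v.val < 3 * (n / 3)}

lemma val_add_cast {n : ℕ} (v : Fin (n+1)) (k : ℕ) :
    (v + (k : Fin (n+1))).val = (v.val + k) % (n+1) := by
  rw [Fin.val_add, Fin.val_natCast, Nat.add_mod_mod]

lemma T0_packing {m : ℕ} : ∀ v : Fin (m+5), v ∉ (T0 (m+5))ᶜ →
    ((v + 1 ∈ (T0 (m+5))ᶜ) ∧ (v + 2 ∈ (T0 (m+5))ᶜ)) := by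
  intro v hv
  rw [Set.notMem_compl_iff] at hv
  obtain ⟨hmod, hlt⟩ := hv
  have hvlt : v.val < m + 5 := v.isLt
  have hdiv : 3 * ((m+5) / 3) ≤ m + 5 := Nat.mul_div_le _ 3
  constructor
  · rw [Set.mem_compl_iff]
    intro ⟨h1, _⟩
    have heval : (v + 1).val = (v.val + 1) % (m+5) := by
      have := val_add_cast (n := m+4) v 1
      simpa using this
    rcases Nat.lt_or_ge (v.val + 1) (m+5) with hc | hc
    · rw [Nat.mod_eq_of_lt hc] at heval
      omega
    · rw [Nat.mod_eq_sub_mod hc, Nat.mod_eq_of_lt (by omega)] at heval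
      omega
  · rw [Set.mem_compl_iff]
    intro ⟨h1, _⟩
    have heval : (v + 2).val = (v.val + 2) % (m+5) := by
      have := val_add_cast (n := m+4) v 2
      simpa using this
    rcases Nat.lt_or_ge (v.val + 2) (m+5) with hc | hc
    · rw [Nat.mod_eq_of_lt hc] at heval
      omega
    · rw [Nat.mod_eq_sub_mod hc, Nat.mod_eq_of_lt (by omega)] at heval
      omega

lemma T0_ncard {n : ℕ} : (T0 n).ncard = n / 3 := by
  classical
  rw [Set.ncard_eq_toFinset_card']
  rw [show n / 3 = (Finset.range (n/3)).card from (Finset.card_range _).symm]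
  apply Finset.card_bij (fun v _ => v.val / 3)
  · intro v hv
    rw [Set.mem_toFinset] at hv
    obtain ⟨h1, h2⟩ := hv
    rw [Finset.mem_range]
    omega
  · intro a ha b hb hab
    rw [Set.mem_toFinset] at ha hb
    obtain ⟨ha1, _⟩ := ha; obtain ⟨hb1, _⟩ := hb
    have : a.val = b.val := by omega
    exact Fin.ext this
  · intro k hk
    rw [Finset.mem_range] at hk
    have h3 : 3 * k + 2 < n := by omega
    refine ⟨⟨3*k+2, h3⟩, ?_, by simp; omega⟩
    rw [Set.mem_toFinset]
    exact ⟨by simp, by simp; omega⟩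

lemma univ_redLD {m : ℕ} : IsRedLDSet (cycleGraph (m+3)) Set.univ := by
  constructor
  · exact ⟨fun v hv => absurd (Set.mem_univ v) hv,
      fun u hu _ _ _ => absurd (Set.mem_univ u) hu⟩
  · intro x _
    constructor
    · intro v hv
      have hvx : v = x := by
        by_contra hne
        exact hv ⟨trivial, hne⟩
      subst hvx
      refine ⟨v + 1, memN.mpr (Or.inr rfl), trivial, ?_⟩
      intro h
      rw [Set.mem_singleton_iff] at h
      exact fin1ne (by linear_combination h)
    · intro u hu v hv huv _
      have hux : u = x := by
        by_contra hne
        exact hu ⟨trivial, hne⟩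
      have hvx : v = x := by
        by_contra hne
        exact hv ⟨trivial, hne⟩
      exact huv (hux.trans hvx.symm)

lemma lower3 {S : Set (Fin 3)} (hS : IsRedLDSet (cycleGraph 3) S) : ∀ u, u ∈ S := by
  intro u
  by_contra hu
  have h34 : (3 : Fin 3) = 0 := by decide
  have h1 : u + 1 ∈ S := lemA1 (m := 0) hS hu
  obtain ⟨_, hred⟩ := hS
  obtain ⟨_, hdist'⟩ := hred _ h1
  have hu' : u ∉ S \ {u+1} := fun h => hu h.1
  have hx' : (u+1) ∉ S \ {u+1} := fun h => h.2 rfl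
  have hne : u ≠ u + 1 := fun h => fin1ne (m := 0) (by linear_combination -h)
  refine hdist' u hu' (u+1) hx' hne ?_
  have e1 : u - 1 = u + 2 := by linear_combination -h34
  have e2 : u + 1 - 1 = u := by ring
  have e3 : u + 1 + 1 = u + 2 := by ring
  ext a
  simp only [Set.mem_inter_iff, memN (m := 0), Set.mem_diff, Set.mem_singleton_iff]
  rw [e1, e2, e3]
  constructor
  · rintro ⟨rfl | rfl, h, hne2⟩
    · exact ⟨Or.inr rfl, h, hne2⟩
    · exact absurd rfl hne2
  · rintro ⟨rfl | rfl, h, hne2⟩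
    · exact absurd h hu
    · exact ⟨Or.inl rfl, h, hne2⟩

lemma lower4 {S : Set (Fin 4)} (hS : IsRedLDSet (cycleGraph 4) S) : ∀ u, u ∈ S := by
  intro u
  by_contra hu
  have h44 : (4 : Fin 4) = 0 := by decide
  have h2 : u + 2 ∈ S := lemA2 (m := 1) hS hu
  obtain ⟨_, hred⟩ := hS
  obtain ⟨_, hdist'⟩ := hred _ h2
  have hu' : u ∉ S \ {u+2} := fun h => hu h.1
  have hx' : (u+2) ∉ S \ {u+2} := fun h => h.2 rfl
  have hne : u ≠ u + 2 := fun h => fin2ne (m := 1) (by linear_combination -h)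
  refine hdist' u hu' (u+2) hx' hne ?_
  have hNeq : (cycleGraph 4).neighborSet u = (cycleGraph 4).neighborSet (u+2) := by
    have e1 : u - 1 = u + 2 + 1 := by linear_combination -h44
    have e2 : u + 1 = u + 2 - 1 := by ring
    ext a
    rw [memN (m := 1), memN (m := 1), e1, e2]
    tauto
  rw [hNeq]

end Aux

theorem stmt8 (n : ℕ) :
    (5 ≤ n → IsLeast {m : ℕ | ∃ S : Set (Fin n),
        IsRedLDSet (SimpleGraph.cycleGraph n) S ∧ S.ncard = m} ((2 * n + 2) / 3)) ∧
    (3 ≤ n → n ≤ 4 → IsLeast {m : ℕ | ∃ S : Set (Fin n),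
        IsRedLDSet (SimpleGraph.cycleGraph n) S ∧ S.ncard = m} n) := by
  constructor
  · intro h5
    obtain ⟨m, rfl⟩ : ∃ m, n = m + 5 := ⟨n - 5, by omega⟩
    constructor
    · refine ⟨(T0 (m+5))ᶜ, lemB (fun v hv => (T0_packing v hv).1)
        (fun v hv => (T0_packing v hv).2), ?_⟩
      have hsum : (T0 (m+5)).ncard + (T0 (m+5))ᶜ.ncard = m + 5 := by
        rw [Set.ncard_add_ncard_compl, Nat.card_eq_fintype_card, Fintype.card_fin]
      have := T0_ncard (n := m+5)
      omega
    · rintro k ⟨S, hS, rfl⟩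
      have := lowerBound (by omega) hS
      omega
  · intro h3 h4
    interval_cases n
    · constructor
      · refine ⟨Set.univ, univ_redLD (m := 0), ?_⟩
        rw [Set.ncard_univ, Nat.card_eq_fintype_card, Fintype.card_fin]
      · rintro k ⟨S, hS, rfl⟩
        have hSu : S = Set.univ := Set.eq_univ_of_forall (lower3 hS)
        rw [hSu, Set.ncard_univ, Nat.card_eq_fintype_card, Fintype.card_fin]
    · constructor
      · refine ⟨Set.univ, univ_redLD (m := 1), ?_⟩
        rw [Set.ncard_univ, Nat.card_eq_fintype_card, Fintype.card_fin]
      · rintro k ⟨S, hS, rfl⟩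
        have hSu : S = Set.univ := Set.eq_univ_of_forall (lower4 hS)
        rw [hSu, Set.ncard_univ, Nat.card_eq_fintype_card, Fintype.card_fin]
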